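/- For every odd integer 2n+1 ≥ 3, the generalized Mycielskian M_m(C_{2n+1}) of an odd cycle is not 3-colorable for any m ≥ 1; equivalently every graph in the class K_4 of generalized Mycielski graphs obtained from odd cycles has chromatic number at least 4. -/

import Mathlib

open Finset

/-- The cycle on `ZMod m`, with `i` adjacent to `i ± 1`. -/
def cycleZMod (m : ℕ) : SimpleGraph (ZMod m) :=
  SimpleGraph.fromRel (fun i j => j = i + 1)

/-- The generalised Mycielskian (`n`-th cone) `M_n(G)`: the categorical product of `G`
with the looped path `0,1,…,n` (loop at `0`), with all vertices at level `n`
identified to a single apex (`Sum.inr ()`). Levels `0,…,n-1` are `Sum.inl (u, i)`. -/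
def Mycielskian {α : Type*} (G : SimpleGraph α) (n : ℕ) :
    SimpleGraph (α × Fin n ⊕ Unit) where
  Adj x y :=
    match x, y with
    | Sum.inl (u, i), Sum.inl (v, j) =>
        G.Adj u v ∧ ((i.val = 0 ∧ j.val = 0) ∨ i.val + 1 = j.val ∨ j.val + 1 = i.val)
    | Sum.inl (u, i), Sum.inr _ => i.val + 1 = n ∧ ∃ v, G.Adj u v
    | Sum.inr _, Sum.inl (v, j) => j.val + 1 = n ∧ ∃ u, G.Adj v u
    | Sum.inr _, Sum.inr _ => False
  symm := by
    constructor
    rintro (⟨u, i⟩ | ⟨⟩) (⟨v, j⟩ | ⟨⟩) h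
    · exact ⟨h.1.symm, by tauto⟩
    · exact h
    · exact h
    · exact h
  loopless := by
    constructor
    rintro (⟨u, i⟩ | ⟨⟩) h
    · exact G.irrefl h.1
    · exact h

/-! ### Winding number machinery -/

/-- The step of an edge of `K_3` (vertices `ZMod 3`): `+1` or `-1`. -/
private def stp (a b : ZMod 3) : ℤ :=
  if b = a + 1 then 1 else if a = b + 1 then -1 else 0

private lemma stp_add_stp (a y : ZMod 3) : stp a y + stp y a = 0 := by
  revert a y; decide

private lemma stp_key : ∀ p q q' r : ZMod 3, p ≠ q → q ≠ r → p ≠ q' → q' ≠ r →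
    stp p q + stp q r = stp p q' + stp q' r := by decide

private lemma stp_par : ∀ a b : ZMod 3, a ≠ b → ((stp a b : ZMod 2)) = 1 := by decide

/-- Winding number of a color sequence over `N` steps. -/
private def Wd (w : ℕ → ZMod 3) (N : ℕ) : ℤ :=
  ∑ t ∈ range N, stp (w t) (w (t + 1))

private lemma sum_pair (f : ℕ → ℤ) (N : ℕ) :
    ∑ t ∈ range (2 * N), f t = ∑ s ∈ range N, (f (2 * s) + f (2 * s + 1)) := by
  induction N with
  | zero => simp
  | succ n ih =>
      rw [Finset.sum_range_succ, ← ih, show 2 * (n + 1) = (2 * n + 1) + 1 by ring,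
        Finset.sum_range_succ, Finset.sum_range_succ]
      ring

private lemma Wd_shift (w : ℕ → ZMod 3) (N : ℕ) (hper : ∀ t, w (t + N) = w t) :
    Wd (fun t => w (t + 1)) N = Wd w N := by
  unfold Wd
  have h1 : ∑ t ∈ range N, stp (w (t + 1)) (w (t + 1 + 1))
      = ∑ t ∈ range (N + 1), stp (w t) (w (t + 1)) - stp (w 0) (w (0 + 1)) := by
    rw [Finset.sum_range_succ']; ring
  have hN : w N = w 0 := by simpa using hper 0
  have hN1 : w (N + 1) = w 1 := by
    have := hper 1; rwa [Nat.add_comm 1 N] at this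
  rw [h1, Finset.sum_range_succ, hN, hN1]
  norm_num

private lemma Wd_changeOdd (w w' : ℕ → ZMod 3) (L : ℕ)
    (pw : ∀ t, w t ≠ w (t + 1)) (pw' : ∀ t, w' t ≠ w' (t + 1))
    (he : ∀ t, t % 2 = 0 → w t = w' t) :
    Wd w (2 * L) = Wd w' (2 * L) := by
  unfold Wd
  rw [sum_pair, sum_pair]
  apply Finset.sum_congr rfl
  intro s _
  have e0 : w (2 * s) = w' (2 * s) := he _ (by omega)
  have e2 : w (2 * s + 1 + 1) = w' (2 * s + 1 + 1) := he _ (by omega)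
  calc stp (w (2 * s)) (w (2 * s + 1)) + stp (w (2 * s + 1)) (w (2 * s + 1 + 1))
      = stp (w (2 * s)) (w' (2 * s + 1)) + stp (w' (2 * s + 1)) (w (2 * s + 1 + 1)) := by
        refine stp_key _ _ _ _ (pw _) (pw _) ?_ ?_
        · rw [e0]; exact pw' _
        · rw [e2]; exact pw' _
    _ = _ := by rw [e0, e2]

private lemma Wd_changeEven (w w' : ℕ → ZMod 3) (L : ℕ)
    (hw : ∀ t, w (t + 2 * L) = w t) (hw' : ∀ t, w' (t + 2 * L) = w' t)
    (pw : ∀ t, w t ≠ w (t + 1)) (pw' : ∀ t, w' t ≠ w' (t + 1))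
    (he : ∀ t, t % 2 = 1 → w t = w' t) :
    Wd w (2 * L) = Wd w' (2 * L) := by
  rw [← Wd_shift w _ hw, ← Wd_shift w' _ hw']
  exact Wd_changeOdd _ _ L (fun t => pw (t + 1)) (fun t => pw' (t + 1))
    (fun t ht => he (t + 1) (by omega))

private lemma Wd_topEven (w : ℕ → ZMod 3) (L : ℕ) (a : ZMod 3)
    (ha : ∀ t, t % 2 = 0 → w t = a) : Wd w (2 * L) = 0 := by
  unfold Wd
  rw [sum_pair]
  apply Finset.sum_eq_zero
  intro s _
  rw [ha (2 * s) (by omega), ha (2 * s + 1 + 1) (by omega)]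
  exact stp_add_stp a _

private lemma Wd_topOdd (w : ℕ → ZMod 3) (L : ℕ) (a : ZMod 3)
    (hw : ∀ t, w (t + 2 * L) = w t)
    (ha : ∀ t, t % 2 = 1 → w t = a) : Wd w (2 * L) = 0 := by
  rw [← Wd_shift w _ hw]
  exact Wd_topEven _ L a (fun t ht => ha (t + 1) (by omega))

private lemma Wd_double (w : ℕ → ZMod 3) (L : ℕ) (hper : ∀ t, w (t + L) = w t) :
    Wd w (2 * L) = 2 * Wd w L := by
  unfold Wd
  rw [two_mul, Finset.sum_range_add, two_mul]
  congr 1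
  apply Finset.sum_congr rfl
  intro t _
  rw [show L + t = t + L by ring, hper, show t + L + 1 = (t + 1) + L by ring, hper]

/-- The abstract core: no proper 3-coloring data on the generalized Mycielskian of an
odd cycle of length `L ≥ 3` can exist. -/
private lemma no3col (L m : ℕ) (hL : 3 ≤ L) (hLodd : L % 2 = 1) (hm : 1 ≤ m)
    (col : ℕ → ℕ → ZMod 3)
    (hperL : ∀ k j, col (k + L) j = col k j)
    (hconst : ∀ k, col k m = col 0 m)
    (h0 : ∀ k, col k 0 ≠ col (k + 1) 0)
    (hd1 : ∀ k j, j + 1 ≤ m → col k j ≠ col (k + 1) (j + 1))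
    (hd2 : ∀ k j, j + 1 ≤ m → col (k + 1) j ≠ col k (j + 1)) :
    False := by
  -- the zigzag sequence at level `r`
  set zz : ℕ → ℕ → ZMod 3 :=
    fun r t => col t (if t % 2 = r % 2 then r else r + 1) with hzz
  have hper2 : ∀ r t, zz r (t + 2 * L) = zz r t := by
    intro r t
    simp only [hzz]
    have hmod : (t + 2 * L) % 2 = t % 2 := by omega
    have hcol : ∀ j, col (t + 2 * L) j = col t j := by
      intro j
      rw [show t + 2 * L = (t + L) + L by ring, hperL, hperL]
    rw [hmod, hcol]
  have hprop : ∀ r, r + 1 ≤ m → ∀ t, zz r t ≠ zz r (t + 1) := by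
    intro r hr t
    simp only [hzz]
    by_cases h : t % 2 = r % 2
    · rw [if_pos h, if_neg (by omega)]
      exact hd1 t r hr
    · rw [if_neg h, if_pos (by omega)]
      exact (hd2 t r hr).symm
  have hstep : ∀ r, r + 2 ≤ m → Wd (zz r) (2 * L) = Wd (zz (r + 1)) (2 * L) := by
    intro r hr
    have p1 := hprop r (by omega)
    have p2 := hprop (r + 1) (by omega)
    have hagree : ∀ t, t % 2 ≠ r % 2 → zz r t = zz (r + 1) t := by
      intro t ht
      simp only [hzz]
      rw [if_neg ht, if_pos (by omega)]
    by_cases hrp : r % 2 = 0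
    · exact Wd_changeEven _ _ L (hper2 r) (hper2 (r + 1)) p1 p2
        (fun t ht => hagree t (by omega))
    · exact Wd_changeOdd _ _ L p1 p2 (fun t ht => hagree t (by omega))
  have hchain : ∀ j, j + 1 ≤ m → Wd (zz 0) (2 * L) = Wd (zz j) (2 * L) := by
    intro j
    induction j with
    | zero => intro _; rfl
    | succ i ih =>
        intro h
        rw [ih (by omega), hstep i (by omega)]
  have htop : Wd (zz (m - 1)) (2 * L) = 0 := by
    have ha : ∀ t, t % 2 ≠ (m - 1) % 2 → zz (m - 1) t = col 0 m := by
      intro t ht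
      simp only [hzz]
      rw [if_neg ht, show m - 1 + 1 = m by omega]
      exact hconst t
    by_cases hmp : m % 2 = 0
    · exact Wd_topEven _ L (col 0 m) (fun t ht => ha t (by omega))
    · exact Wd_topOdd _ L (col 0 m) (hper2 _) (fun t ht => ha t (by omega))
  have hbase : Wd (fun t => col t 0) (2 * L) = Wd (zz 0) (2 * L) := by
    apply Wd_changeOdd _ _ L (fun t => h0 t) (hprop 0 hm)
    intro t ht
    simp only [hzz]
    rw [if_pos (by omega)]
  have hdbl : Wd (fun t => col t 0) (2 * L) = 2 * Wd (fun t => col t 0) L :=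
    Wd_double _ L (fun t => hperL t 0)
  set S := Wd (fun t => col t 0) L with hSdef
  have hS0 : 2 * S = 0 := by
    rw [← hdbl, hbase, hchain (m - 1) (by omega), htop]
  have hS : S = 0 := by omega
  have hSodd : (S : ZMod 2) = 1 := by
    rw [hSdef]
    unfold Wd
    push_cast
    rw [Finset.sum_congr rfl (fun t _ => stp_par _ _ (h0 t))]
    simp only [Finset.sum_const, Finset.card_range, nsmul_eq_mul, mul_one]
    rw [← ZMod.natCast_mod, hLodd]
    norm_num
  rw [hS] at hSodd
  exact absurd hSodd (by decide)

theorem stmt10 (n m : ℕ) (hn : 1 ≤ n) (hm : 1 ≤ m) :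
    ¬ (Mycielskian (cycleZMod (2 * n + 1)) m).Colorable 3 ∧
      4 ≤ (Mycielskian (cycleZMod (2 * n + 1)) m).chromaticNumber := by
  have key : ¬ (Mycielskian (cycleZMod (2 * n + 1)) m).Colorable 3 := by
    rintro ⟨C⟩
    set L := 2 * n + 1 with hLdef
    haveI : Fact (1 < L) := ⟨by omega⟩
    have hadj : ∀ k : ZMod L, (cycleZMod L).Adj k (k + 1) := by
      intro k
      rw [cycleZMod, SimpleGraph.fromRel_adj]
      refine ⟨fun h => ?_, Or.inl rfl⟩
      exact one_ne_zero (left_eq_add.mp h)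
    have hinj : Function.Injective (fun (i : Fin 3) => ((i : ℕ) : ZMod 3)) := by decide
    set c : (ZMod L × Fin m ⊕ Unit) → ZMod 3 :=
      fun v => (((C v : Fin 3) : ℕ) : ZMod 3) with hcdef
    have hc : ∀ u v, (Mycielskian (cycleZMod L) m).Adj u v → c u ≠ c v :=
      fun u v h he => C.valid h (hinj he)
    set col : ℕ → ℕ → ZMod 3 := fun k j =>
      if h : j < m then c (Sum.inl ((k : ZMod L), ⟨j, h⟩)) else c (Sum.inr ()) with hcol
    have hcastL : ∀ k : ℕ, ((k + L : ℕ) : ZMod L) = (k : ZMod L) := by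
      intro k; push_cast [ZMod.natCast_self]; ring
    have hcast1 : ∀ k : ℕ, ((k + 1 : ℕ) : ZMod L) = (k : ZMod L) + 1 := by
      intro k; push_cast; ring
    have hperL : ∀ k j, col (k + L) j = col k j := by
      intro k j
      simp only [hcol, hcastL]
    have hconst : ∀ k, col k m = col 0 m := by
      intro k
      simp only [hcol, dif_neg (lt_irrefl m)]
    have h0 : ∀ k, col k 0 ≠ col (k + 1) 0 := by
      intro k
      simp only [hcol, dif_pos (show 0 < m by omega), hcast1]
      refine hc _ _ ?_
      exact ⟨hadj _, Or.inl ⟨rfl, rfl⟩⟩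
    have hd1 : ∀ k j, j + 1 ≤ m → col k j ≠ col (k + 1) (j + 1) := by
      intro k j hj
      rcases Nat.lt_or_ge (j + 1) m with h | h
      · simp only [hcol, dif_pos (by omega : j < m), dif_pos h, hcast1]
        refine hc _ _ ?_
        exact ⟨hadj _, Or.inr (Or.inl rfl)⟩
      · have hjm : j + 1 = m := by omega
        simp only [hcol, dif_pos (by omega : j < m), dif_neg (by omega : ¬ j + 1 < m)]
        refine hc _ _ ?_
        exact ⟨hjm, ⟨_, hadj (k : ZMod L)⟩⟩
    have hd2 : ∀ k j, j + 1 ≤ m → col (k + 1) j ≠ col k (j + 1) := by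
      intro k j hj
      rcases Nat.lt_or_ge (j + 1) m with h | h
      · simp only [hcol, dif_pos (by omega : j < m), dif_pos h, hcast1]
        refine hc _ _ ?_
        exact ⟨(cycleZMod L).adj_symm (hadj _), Or.inr (Or.inl rfl)⟩
      · have hjm : j + 1 = m := by omega
        simp only [hcol, dif_pos (by omega : j < m), dif_neg (by omega : ¬ j + 1 < m)]
        refine hc _ _ ?_
        exact ⟨hjm, ⟨_, hadj _⟩⟩
    exact no3col L m (by omega) (by omega) hm col hperL hconst h0 hd1 hd2
  refine ⟨key, ?_⟩
  have h3 : ¬ (Mycielskian (cycleZMod (2 * n + 1)) m).chromaticNumber ≤ (3 : ℕ) := by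
    rw [SimpleGraph.chromaticNumber_le_iff_colorable]
    exact key
  have h4 := Order.add_one_le_of_lt (not_le.mp h3)
  calc (4 : ℕ∞) = (3 : ℕ) + 1 := by norm_num
    _ ≤ _ := h4
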